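/- Let d ≥ 1 and define K̂_t(z) := ∫_0^t κ(e^u|z|) du for z ∈ ℝ^d and t ≥ 0. Then lim_{t→∞} (1/t) ∫_{|z|≤1} e^{d K̂_t(z)} dz = e^{−d j_κ} · 2π^{d/2}/Γ(d/2), where 2π^{d/2}/Γ(d/2) is the surface measure of the unit sphere in ℝ^d. -/

import Mathlib

open MeasureTheory Filter

noncomputable section

abbrev Ed (d : ℕ) := EuclideanSpace ℝ (Fin d)

/-- Positive definite kernel on an open set `U ⊆ ℝ^d`. -/
def PosDefKernel (d : ℕ) (U : Set (Ed d)) (G : Ed d → Ed d → ℝ) : Prop :=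
  ∀ ρ : Ed d → ℝ, Continuous ρ → HasCompactSupport ρ → tsupport ρ ⊆ U →
    0 ≤ ∫ x in U, ∫ y in U, G x y * ρ x * ρ y

/-- `K̂_t(z) = ∫_0^t κ(e^u |z|) du`. -/
def Khatt (d : ℕ) (κ : ℝ → ℝ) (t : ℝ) (z : Ed d) : ℝ :=
  ∫ u in (0:ℝ)..t, κ (Real.exp u * ‖z‖)

/-- `j_κ = ∫_0^∞ (1 − κ(e^{−t})) dt`. -/
def jkappa (κ : ℝ → ℝ) : ℝ := ∫ t in Set.Ioi (0:ℝ), (1 - κ (Real.exp (-t)))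

namespace St11

/-- cumulative integral of `κ (e^{-v})`. -/
def G (κ : ℝ → ℝ) (x : ℝ) : ℝ := ∫ v in (0:ℝ)..x, κ (Real.exp (-v))

def jK (κ : ℝ → ℝ) : ℝ := ∫ t in Set.Ioi (0:ℝ), (1 - κ (Real.exp (-t)))

def phi (κ : ℝ → ℝ) (d : ℕ) (t s : ℝ) : ℝ :=
  Real.exp ((d : ℝ) * (G κ s - G κ (s - t)) - d * s)

lemma expneg_int (s : ℝ) : IntegrableOn (fun v : ℝ => Real.exp (-v)) (Set.Ioi s) := by
  simpa [neg_mul, one_mul] using exp_neg_integrableOn_Ioi s one_pos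

lemma cexpneg_int (a : ℝ) (s : ℝ) :
    IntegrableOn (fun v : ℝ => a * Real.exp (-v)) (Set.Ioi s) :=
  (expneg_int s).const_mul a

lemma abs_exp_sub_one (x : ℝ) : |Real.exp x - 1| ≤ |x| * Real.exp |x| := by
  rcases le_or_gt 0 x with hx | hx
  · rw [abs_of_nonneg hx, abs_of_nonneg (by linarith [Real.one_le_exp hx])]
    have h := Real.add_one_le_exp (-x)
    have h2 : (1 - x) * Real.exp x ≤ 1 := by
      have := mul_le_mul_of_nonneg_right (by linarith : 1 - x ≤ Real.exp (-x)) (Real.exp_nonneg x)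
      rwa [← Real.exp_add, neg_add_cancel, Real.exp_zero] at this
    nlinarith [Real.exp_nonneg x]
  · rw [abs_of_neg hx, abs_of_nonpos (by linarith [Real.exp_lt_one_iff.mpr hx])]
    have h := Real.add_one_le_exp x
    have h3 := Real.one_le_exp (le_of_lt (neg_pos.mpr hx))
    nlinarith

lemma image_expneg : (fun x : ℝ => Real.exp (-x)) '' Set.Ioi 0 = Set.Ioo 0 1 := by
  ext y
  constructor
  · rintro ⟨x, hx, rfl⟩
    exact ⟨Real.exp_pos _, Real.exp_lt_one_iff.mpr (neg_neg_iff_pos.mpr hx)⟩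
  · rintro ⟨hy0, hy1⟩
    exact ⟨-Real.log y, by simpa using Real.log_neg hy0 hy1, by simp [Real.exp_log hy0]⟩

lemma cov (g : ℝ → ℝ) :
    (∫ y in Set.Ioo (0:ℝ) 1, g y) = ∫ s in Set.Ioi (0:ℝ), Real.exp (-s) * g (Real.exp (-s)) := by
  have hderiv : ∀ x ∈ Set.Ioi (0:ℝ), HasDerivWithinAt (fun x : ℝ => Real.exp (-x))
      (-Real.exp (-x)) (Set.Ioi (0:ℝ)) x := by
    intro x _
    have h : HasDerivAt (fun x : ℝ => Real.exp (-x)) (Real.exp (-x) * (-1)) x :=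
      (Real.hasDerivAt_exp (-x)).comp x (hasDerivAt_neg x)
    simpa using h.hasDerivWithinAt
  have hinj : Set.InjOn (fun x : ℝ => Real.exp (-x)) (Set.Ioi 0) :=
    (Real.exp_injective.comp neg_injective).injOn
  rw [← image_expneg,
    MeasureTheory.integral_image_eq_integral_abs_deriv_smul measurableSet_Ioi hderiv hinj g]
  refine MeasureTheory.setIntegral_congr_fun measurableSet_Ioi fun s _ => ?_
  simp [abs_of_nonneg (Real.exp_nonneg _)]

variable {κ : ℝ → ℝ} {c : NNReal} {d : ℕ}
variable (hlip : LipschitzWith c κ) (hκ0 : κ 0 = 1) (hκ1 : ∀ r : ℝ, 1 ≤ r → κ r = 0)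
  (hκnn : ∀ r : ℝ, 0 ≤ κ r) (hd : 1 ≤ d)

include hlip

lemma contInt : Continuous fun v : ℝ => κ (Real.exp (-v)) :=
  hlip.continuous.comp (Real.continuous_exp.comp continuous_neg)

lemma G_cont : Continuous (G κ) :=
  intervalIntegral.continuous_primitive (fun a b => (contInt hlip).intervalIntegrable a b) 0

lemma phi_cont (t : ℝ) : Continuous (phi κ d t) := by
  apply Real.continuous_exp.comp
  exact (continuous_const.mul ((G_cont hlip).sub ((G_cont hlip).comp
    (continuous_id.sub continuous_const)))).sub (continuous_const.mul continuous_id)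

lemma G_diff (t s : ℝ) : G κ s - G κ (s - t) = ∫ v in (s - t)..s, κ (Real.exp (-v)) := by
  unfold G
  exact (intervalIntegral.integral_interval_sub_left (μ := volume)
    ((contInt hlip).intervalIntegrable 0 s)
    ((contInt hlip).intervalIntegrable 0 (s - t)))

omit hlip in
include hκ1 in
lemma G_nonpos {x : ℝ} (hx : x ≤ 0) : G κ x = 0 := by
  have h0 : ∫ v in x..(0:ℝ), κ (Real.exp (-v)) = 0 := by
    rw [intervalIntegral.integral_congr (g := fun _ => (0:ℝ)), intervalIntegral.integral_zero]
    intro v hv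
    rw [Set.uIcc_of_le hx] at hv
    exact hκ1 _ (Real.one_le_exp (by linarith [hv.2]))
  have h2 : G κ x = -∫ v in x..(0:ℝ), κ (Real.exp (-v)) := intervalIntegral.integral_symm x 0
  rw [h2, h0, neg_zero]

include hlip in
lemma key_identity (t s : ℝ) :
    (∫ u in (0:ℝ)..t, κ (Real.exp u * Real.exp (-s))) = G κ s - G κ (s - t) := by
  have h1 : (∫ u in (0:ℝ)..t, κ (Real.exp u * Real.exp (-s)))
      = ∫ u in (0:ℝ)..t, (fun w => κ (Real.exp (-w))) (s - u) := by
    apply intervalIntegral.integral_congr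
    intro u _
    simp [← Real.exp_add]
    ring_nf
  rw [h1, intervalIntegral.integral_comp_sub_left (fun w => κ (Real.exp (-w))) s]
  have hInt : ∀ a b : ℝ, IntervalIntegrable (fun w => κ (Real.exp (-w))) volume a b :=
    fun a b => (contInt hlip).intervalIntegrable a b
  rw [sub_zero, ← intervalIntegral.integral_interval_sub_left (hInt 0 s) (hInt 0 (s - t))]
  rfl

include hκ0 in
lemma psi_bound (v : ℝ) : |1 - κ (Real.exp (-v))| ≤ c * Real.exp (-v) := by
  have := hlip.dist_le_mul 0 (Real.exp (-v))
  rw [Real.dist_eq, Real.dist_eq, hκ0] at this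
  simpa [abs_of_nonneg (Real.exp_nonneg _)] using this

include hκ0 in
lemma psi_integrableOn (s : ℝ) : IntegrableOn (fun v => 1 - κ (Real.exp (-v))) (Set.Ioi s) := by
  have hcont : Continuous fun v : ℝ => 1 - κ (Real.exp (-v)) := continuous_const.sub (contInt hlip)
  refine Integrable.mono' (g := fun v => (c : ℝ) * Real.exp (-v)) (cexpneg_int _ s)
    hcont.aestronglyMeasurable ?_
  exact Filter.Eventually.of_forall fun v => by
    simpa using psi_bound hlip hκ0 v

include hκ0 in
lemma tail_bound {s : ℝ} (hs : 0 ≤ s) : |jK κ - (s - G κ s)| ≤ c * Real.exp (-s) := by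
  have hcont : Continuous fun v : ℝ => κ (Real.exp (-v)) := contInt hlip
  have h1 : s - G κ s = ∫ v in (0:ℝ)..s, (1 - κ (Real.exp (-v))) := by
    rw [intervalIntegral.integral_sub intervalIntegrable_const (hcont.intervalIntegrable 0 s)]
    simp [G]
  have h2 : (∫ v in (0:ℝ)..s, (1 - κ (Real.exp (-v))))
      = ∫ v in Set.Ioc 0 s, (1 - κ (Real.exp (-v))) := intervalIntegral.integral_of_le hs
  have h3 : jK κ = (∫ v in Set.Ioc 0 s, (1 - κ (Real.exp (-v))))
      + ∫ v in Set.Ioi s, (1 - κ (Real.exp (-v))) := by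
    rw [jK, ← MeasureTheory.setIntegral_union (Set.Ioc_disjoint_Ioi le_rfl) measurableSet_Ioi
      ((psi_integrableOn hlip hκ0 0).mono_set Set.Ioc_subset_Ioi_self)
      (psi_integrableOn hlip hκ0 s), Set.Ioc_union_Ioi_eq_Ioi hs]
  have h4 : |∫ v in Set.Ioi s, (1 - κ (Real.exp (-v)))| ≤ c * Real.exp (-s) := by
    have := MeasureTheory.norm_integral_le_of_norm_le (μ := volume.restrict (Set.Ioi s))
      (f := fun v => 1 - κ (Real.exp (-v))) (g := fun v => (c : ℝ) * Real.exp (-v))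
      (cexpneg_int _ s)
      (Filter.Eventually.of_forall fun v => by simpa using psi_bound hlip hκ0 v)
    rw [MeasureTheory.integral_const_mul, integral_exp_neg_Ioi] at this
    simpa using this
  rw [h1, h2, h3]
  simpa using h4

include hκ0 hd in
lemma phi_tail_le {t s : ℝ} (ht : 0 ≤ t) (hst : t ≤ s) :
    phi κ d t s ≤ Real.exp ((d : ℝ) * c) * Real.exp (t - s) := by
  have hb : ∀ v : ℝ, κ (Real.exp (-v)) ≤ 1 + (c : ℝ) * Real.exp (-v) := by
    intro v
    have h2 := abs_le.mp (psi_bound hlip hκ0 v)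
    linarith [h2.1]
  have hce : Continuous fun v : ℝ => (c : ℝ) * Real.exp (-v) := by continuity
  have hce1 : Continuous fun v : ℝ => 1 + (c : ℝ) * Real.exp (-v) := by continuity
  have hGd : G κ s - G κ (s - t) ≤ t + (c : ℝ) := by
    rw [G_diff hlip]
    have hle : s - t ≤ s := by linarith
    have h1 : (∫ v in (s - t)..s, κ (Real.exp (-v)))
        ≤ ∫ v in (s - t)..s, (1 + (c : ℝ) * Real.exp (-v)) := by
      apply intervalIntegral.integral_mono_on hle ((contInt hlip).intervalIntegrable _ _)
        (hce1.intervalIntegrable _ _)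
      intro x _; exact hb x
    have h2 : (∫ v in (s - t)..s, (1 + (c : ℝ) * Real.exp (-v)))
        = t + (c : ℝ) * (Real.exp (t - s) - Real.exp (-s)) := by
      rw [intervalIntegral.integral_add (intervalIntegrable_const)
        (hce.intervalIntegrable _ _), intervalIntegral.integral_const_mul]
      have : (∫ v in (s - t)..s, Real.exp (-v)) = Real.exp (t - s) - Real.exp (-s) := by
        rw [intervalIntegral.integral_comp_neg (fun v => Real.exp v), integral_exp]
        ring_nf
      rw [this]
      simp
    have h3 : Real.exp (t - s) - Real.exp (-s) ≤ 1 := by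
      have := Real.exp_le_one_iff.mpr (by linarith : t - s ≤ 0)
      linarith [Real.exp_nonneg (-s)]
    calc (∫ v in (s - t)..s, κ (Real.exp (-v))) ≤ _ := h1
      _ = _ := h2
      _ ≤ t + (c : ℝ) := by
        have := mul_le_mul_of_nonneg_left h3 (NNReal.coe_nonneg c)
        linarith
  rw [phi, ← Real.exp_add]
  apply Real.exp_le_exp.mpr
  have hd1 : (1 : ℝ) ≤ (d : ℝ) := by exact_mod_cast hd
  have hts : t - s ≤ 0 := by linarith
  nlinarith [mul_le_mul_of_nonneg_left hGd (by positivity : (0:ℝ) ≤ (d:ℝ))]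


/-- the constant `L` in the near-field estimate -/
def Lc (κ : ℝ → ℝ) (c : NNReal) (d : ℕ) : ℝ :=
  (d : ℝ) * c * Real.exp ((d : ℝ) * c) * Real.exp (-(d : ℝ) * jK κ)

include hκ0 hκ1 in
lemma phi_near {t s : ℝ} (hs : 0 ≤ s) (hst : s ≤ t) :
    |phi κ d t s - Real.exp (-(d : ℝ) * jK κ)| ≤ Lc κ c d * Real.exp (-s) := by
  have hG0 : G κ (s - t) = 0 := G_nonpos hκ1 (by linarith)
  have hphi : phi κ d t s = Real.exp (-(d:ℝ) * jK κ) *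
      Real.exp ((d:ℝ) * (jK κ - (s - G κ s))) := by
    rw [phi, hG0, ← Real.exp_add]
    ring_nf
  have hx : |(d:ℝ) * (jK κ - (s - G κ s))| ≤ (d:ℝ) * c * Real.exp (-s) := by
    rw [abs_mul, Nat.abs_cast]
    have := tail_bound hlip hκ0 hs
    calc (d:ℝ) * |jK κ - (s - G κ s)| ≤ (d:ℝ) * ((c:ℝ) * Real.exp (-s)) :=
      mul_le_mul_of_nonneg_left this (by positivity)
      _ = (d:ℝ) * c * Real.exp (-s) := by ring
  have hxc : |(d:ℝ) * (jK κ - (s - G κ s))| ≤ (d:ℝ) * c := by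
    refine hx.trans ?_
    have h1 : Real.exp (-s) ≤ 1 := Real.exp_le_one_iff.mpr (by linarith)
    have h2 := mul_le_mul_of_nonneg_left h1
      (show (0:ℝ) ≤ (d:ℝ) * (c:ℝ) by positivity)
    calc (d:ℝ) * c * Real.exp (-s) = (d:ℝ) * (c:ℝ) * Real.exp (-s) := by norm_num
      _ ≤ (d:ℝ) * (c:ℝ) * 1 := h2
      _ = (d:ℝ) * c := by ring
  set x := (d:ℝ) * (jK κ - (s - G κ s)) with hxdef
  have habs : |Real.exp x - 1| ≤ ((d:ℝ) * c * Real.exp (-s)) * Real.exp ((d:ℝ) * c) := by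
    refine (abs_exp_sub_one x).trans ?_
    have h2 : Real.exp |x| ≤ Real.exp ((d:ℝ)*c) := Real.exp_le_exp.mpr hxc
    have := mul_le_mul hx h2 (Real.exp_nonneg _) (by positivity)
    simpa using this
  rw [hphi]
  have : Real.exp (-(d:ℝ) * jK κ) * Real.exp x - Real.exp (-(d:ℝ) * jK κ)
      = Real.exp (-(d:ℝ) * jK κ) * (Real.exp x - 1) := by ring
  rw [this, abs_mul, abs_of_nonneg (Real.exp_nonneg _), Lc]
  calc Real.exp (-(d:ℝ) * jK κ) * |Real.exp x - 1|
      ≤ Real.exp (-(d:ℝ) * jK κ) * (((d:ℝ) * c * Real.exp (-s)) * Real.exp ((d:ℝ) * c)) :=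
        mul_le_mul_of_nonneg_left habs (Real.exp_nonneg _)
    _ = (d:ℝ) * c * Real.exp ((d:ℝ)*c) * Real.exp (-(d:ℝ) * jK κ) * Real.exp (-s) := by ring

include hκ0 hd in
lemma phi_int_Ioi {t : ℝ} (ht : 0 ≤ t) : IntegrableOn (phi κ d t) (Set.Ioi t) := by
  refine Integrable.mono' (g := fun s => Real.exp ((d:ℝ)*c + t) * Real.exp (-s))
    (cexpneg_int _ t) (phi_cont hlip t).aestronglyMeasurable ?_
  filter_upwards [ae_restrict_mem measurableSet_Ioi] with s hs
  have hpos : (0:ℝ) ≤ phi κ d t s := by rw [phi]; positivity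
  rw [Real.norm_eq_abs, abs_of_nonneg hpos]
  calc phi κ d t s ≤ Real.exp ((d:ℝ)*c) * Real.exp (t - s) := phi_tail_le hlip hκ0 hd ht (le_of_lt hs)
    _ = Real.exp ((d:ℝ)*c + t) * Real.exp (-s) := by rw [← Real.exp_add, ← Real.exp_add]; ring_nf

include hκ0 hκ1 hd in
lemma main_est {t : ℝ} (ht : 0 ≤ t) :
    |(∫ s in Set.Ioi (0:ℝ), phi κ d t s) - t * Real.exp (-(d:ℝ) * jK κ)|
      ≤ Lc κ c d + Real.exp ((d:ℝ) * c) := by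
  have hIoc : IntegrableOn (phi κ d t) (Set.Ioc 0 t) :=
    ((phi_cont hlip t).integrableOn_Icc).mono_set Set.Ioc_subset_Icc_self
  have hIoi : IntegrableOn (phi κ d t) (Set.Ioi t) := phi_int_Ioi hlip hκ0 hd ht
  have hsplit : (∫ s in Set.Ioi (0:ℝ), phi κ d t s)
      = (∫ s in Set.Ioc (0:ℝ) t, phi κ d t s) + ∫ s in Set.Ioi t, phi κ d t s := by
    rw [← MeasureTheory.setIntegral_union (Set.Ioc_disjoint_Ioi le_rfl) measurableSet_Ioi
      hIoc hIoi, Set.Ioc_union_Ioi_eq_Ioi ht]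
  have hconst : t * Real.exp (-(d:ℝ) * jK κ)
      = ∫ _ in Set.Ioc (0:ℝ) t, Real.exp (-(d:ℝ) * jK κ) := by
    rw [MeasureTheory.setIntegral_const, measureReal_def, Real.volume_Ioc, smul_eq_mul,
      ENNReal.toReal_ofReal (by linarith)]
    ring_nf
  have hA : |(∫ s in Set.Ioc (0:ℝ) t, phi κ d t s) - t * Real.exp (-(d:ℝ) * jK κ)|
      ≤ Lc κ c d := by
    rw [hconst, ← MeasureTheory.integral_sub hIoc
      ((integrableOn_const_iff).mpr (Or.inr (by rw [Real.volume_Ioc]; exact ENNReal.ofReal_lt_top)))]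
    have hbd := MeasureTheory.norm_integral_le_of_norm_le
      (μ := volume.restrict (Set.Ioc (0:ℝ) t))
      (f := fun s => phi κ d t s - Real.exp (-(d:ℝ) * jK κ))
      (g := fun s => Lc κ c d * Real.exp (-s))
      ((cexpneg_int _ 0).mono_set Set.Ioc_subset_Ioi_self) ?_
    · refine hbd.trans ?_
      beta_reduce
      have hLc : (0:ℝ) ≤ Lc κ c d := by rw [Lc]; positivity
      have hmono : (∫ s in Set.Ioc (0:ℝ) t, Lc κ c d * Real.exp (-s))
          ≤ ∫ s in Set.Ioi (0:ℝ), Lc κ c d * Real.exp (-s) := by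
        refine MeasureTheory.setIntegral_mono_set (cexpneg_int _ 0) ?_ ?_
        · filter_upwards with s
          exact mul_nonneg hLc (Real.exp_nonneg _)
        · exact (Set.Ioc_subset_Ioi_self).eventuallyLE
      refine hmono.trans_eq ?_
      rw [MeasureTheory.integral_const_mul, integral_exp_neg_Ioi]
      simp
    · filter_upwards [ae_restrict_mem measurableSet_Ioc] with s hs
      beta_reduce
      rw [Real.norm_eq_abs]
      exact phi_near hlip hκ0 hκ1 (le_of_lt hs.1) hs.2
  have hB : |∫ s in Set.Ioi t, phi κ d t s| ≤ Real.exp ((d:ℝ) * c) := by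
    have hbd := MeasureTheory.norm_integral_le_of_norm_le
      (μ := volume.restrict (Set.Ioi t)) (f := fun s => phi κ d t s)
      (g := fun s => Real.exp ((d:ℝ)*c + t) * Real.exp (-s)) (cexpneg_int _ t) ?_
    · rw [Real.norm_eq_abs] at hbd
      refine hbd.trans ?_
      beta_reduce
      rw [MeasureTheory.integral_const_mul, integral_exp_neg_Ioi, ← Real.exp_add]
      simp
    · filter_upwards [ae_restrict_mem measurableSet_Ioi] with s hs
      beta_reduce
      have hpos : (0:ℝ) ≤ phi κ d t s := by rw [phi]; positivity
      rw [Real.norm_eq_abs, abs_of_nonneg hpos]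
      calc phi κ d t s ≤ Real.exp ((d:ℝ)*c) * Real.exp (t - s) :=
        phi_tail_le hlip hκ0 hd ht (le_of_lt hs)
        _ = Real.exp ((d:ℝ)*c + t) * Real.exp (-s) := by
          rw [← Real.exp_add, ← Real.exp_add]; ring_nf
  calc |(∫ s in Set.Ioi (0:ℝ), phi κ d t s) - t * Real.exp (-(d:ℝ) * jK κ)|
      = |((∫ s in Set.Ioc (0:ℝ) t, phi κ d t s) - t * Real.exp (-(d:ℝ) * jK κ))
        + ∫ s in Set.Ioi t, phi κ d t s| := by rw [hsplit]; ring_nf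
    _ ≤ _ := (abs_add_le _ _).trans (add_le_add hA hB)


include hlip hd in
lemma radial_eq (t : ℝ) :
    (∫ y in Set.Ioo (0:ℝ) 1,
        y ^ (d - 1) * Real.exp ((d:ℝ) * ∫ u in (0:ℝ)..t, κ (Real.exp u * y)))
      = ∫ s in Set.Ioi (0:ℝ), phi κ d t s := by
  rw [cov (fun y => y ^ (d - 1) * Real.exp ((d:ℝ) * ∫ u in (0:ℝ)..t, κ (Real.exp u * y)))]
  refine MeasureTheory.setIntegral_congr_fun measurableSet_Ioi fun s _ => ?_
  beta_reduce
  rw [key_identity hlip t s, phi]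
  have hp : Real.exp (-s) * Real.exp (-s) ^ (d - 1) = Real.exp (-((d:ℝ) * s)) := by
    have h1 : Real.exp (-s) * Real.exp (-s) ^ (d - 1) = Real.exp (-s) ^ ((d-1) + 1) := by
      rw [pow_succ]; ring
    rw [h1, Nat.sub_add_cancel hd, ← Real.exp_nat_mul]
    ring_nf
  rw [← mul_assoc, hp, ← Real.exp_add]
  ring_nf

include hlip hκ0 hκ1 hd in
lemma tendsto_radial :
    Tendsto (fun t : ℝ => t⁻¹ * ∫ s in Set.Ioi (0:ℝ), phi κ d t s) atTop
      (nhds (Real.exp (-(d:ℝ) * jK κ))) := by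
  set e := Real.exp (-(d:ℝ) * jK κ)
  set C := Lc κ c d + Real.exp ((d:ℝ) * c) with hC
  have h1 : Tendsto (fun t : ℝ => C * t⁻¹) atTop (nhds 0) := by
    simpa using tendsto_inv_atTop_zero.const_mul C
  have h2 : ∀ᶠ t : ℝ in atTop,
      ‖(t⁻¹ * ∫ s in Set.Ioi (0:ℝ), phi κ d t s) - e‖ ≤ C * t⁻¹ := by
    filter_upwards [eventually_ge_atTop (1:ℝ)] with t ht
    have ht0 : (0:ℝ) < t := lt_of_lt_of_le one_pos ht
    have hne : t ≠ 0 := ne_of_gt ht0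
    have heq : (t⁻¹ * ∫ s in Set.Ioi (0:ℝ), phi κ d t s) - e
        = t⁻¹ * ((∫ s in Set.Ioi (0:ℝ), phi κ d t s) - t * e) := by
      field_simp
    rw [heq, Real.norm_eq_abs, abs_mul, abs_of_nonneg (inv_nonneg.mpr (le_of_lt ht0)), mul_comm]
    exact mul_le_mul_of_nonneg_right (main_est hlip hκ0 hκ1 hd (le_of_lt ht0))
      (inv_nonneg.mpr (le_of_lt ht0))
  have h3 := squeeze_zero_norm' h2 h1
  have h4 := h3.add_const e
  simpa using h4

end St11

open St11

theorem statement11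
    (d : ℕ) (hd : 1 ≤ d)
    (κ : ℝ → ℝ) (hκlip : ∃ c : NNReal, LipschitzOnWith c κ (Set.Ici 0))
    (hκnn : ∀ r : ℝ, 0 ≤ r → 0 ≤ κ r) (hκ0 : κ 0 = 1)
    (hκ1 : ∀ r : ℝ, 1 ≤ r → κ r = 0)
    (hκpd : PosDefKernel d Set.univ (fun x y => κ ‖x - y‖)) :
    Tendsto (fun t : ℝ =>
        t⁻¹ * ∫ z in Metric.closedBall (0 : Ed d) 1, Real.exp ((d : ℝ) * Khatt d κ t z))
      atTop
      (nhds (Real.exp (-(d : ℝ) * jkappa κ) *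
        (2 * Real.pi ^ ((d : ℝ) / 2) / Real.Gamma ((d : ℝ) / 2)))) := by

  obtain ⟨c, hlipOn⟩ := hκlip
  set κ' : ℝ → ℝ := fun r => κ (max r 0) with hκ'
  have hlip : LipschitzWith c κ' := by
    refine LipschitzWith.of_dist_le_mul fun x y => ?_
    calc dist (κ' x) (κ' y) ≤ c * dist (max x 0) (max y 0) :=
          hlipOn.dist_le_mul _ (le_max_right x 0) _ (le_max_right y 0)
      _ ≤ c * dist x y := by
          refine mul_le_mul_of_nonneg_left ?_ (NNReal.coe_nonneg c)
          rw [Real.dist_eq, Real.dist_eq]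
          exact abs_max_sub_max_le_abs x y 0
  have hκ'0 : κ' 0 = 1 := by simp [hκ', hκ0]
  have hκ'1 : ∀ r : ℝ, 1 ≤ r → κ' r = 0 := fun r hr => by
    show κ (max r 0) = 0
    rw [max_eq_left (le_trans zero_le_one hr)]
    exact hκ1 r hr
  have hjeq : jkappa κ = jK κ' := by
    unfold jkappa jK
    congr 1
    funext v
    show 1 - κ (Real.exp (-v)) = 1 - κ (max (Real.exp (-v)) 0)
    rw [max_eq_left (Real.exp_nonneg _)]
  have hKeq : ∀ (t : ℝ) (z : Ed d), Khatt d κ t z = ∫ u in (0:ℝ)..t, κ' (Real.exp u * ‖z‖) := by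
    intro t z
    unfold Khatt
    congr 1
    funext u
    show κ (Real.exp u * ‖z‖) = κ (max (Real.exp u * ‖z‖) 0)
    rw [max_eq_left (by positivity)]
  haveI : Nonempty (Fin d) := ⟨⟨0, hd⟩⟩
  -- spatial integral equals radial integral
  have hspatial : ∀ t : ℝ,
      (∫ z in Metric.closedBall (0 : Ed d) 1, Real.exp ((d : ℝ) * Khatt d κ t z))
        = ((d : ℝ) * (volume (Metric.ball (0 : Ed d) 1)).toReal) *
            ∫ s in Set.Ioi (0:ℝ), phi κ' d t s := by
    intro t
    set F : ℝ → ℝ := fun r => Set.indicator (Set.Iic (1:ℝ))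
      (fun r => Real.exp ((d:ℝ) * ∫ u in (0:ℝ)..t, κ' (Real.exp u * r))) r with hF
    have h1 : (∫ z in Metric.closedBall (0 : Ed d) 1, Real.exp ((d : ℝ) * Khatt d κ t z))
        = ∫ z : Ed d, F ‖z‖ := by
      rw [← MeasureTheory.integral_indicator (Metric.isClosed_closedBall.measurableSet)]
      congr 1
      funext z
      by_cases hz : ‖z‖ ≤ 1
      · rw [Set.indicator_of_mem (mem_closedBall_zero_iff.mpr hz), hF]
        beta_reduce
        rw [Set.indicator_of_mem (Set.mem_Iic.mpr hz), hKeq]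
      · rw [Set.indicator_of_notMem (fun h => hz (mem_closedBall_zero_iff.mp h)), hF]
        beta_reduce
        rw [Set.indicator_of_notMem (fun h => hz (Set.mem_Iic.mp h))]
    have h2 : (∫ z : Ed d, F ‖z‖)
        = (Module.finrank ℝ (Ed d)) • (volume (Metric.ball (0 : Ed d) 1)).toReal •
            ∫ y in Set.Ioi (0:ℝ), y ^ (Module.finrank ℝ (Ed d) - 1) • F y :=
      MeasureTheory.integral_fun_norm_addHaar volume F
    have hrank : Module.finrank ℝ (Ed d) = d := finrank_euclideanSpace_fin
    rw [h1, h2, hrank]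
    have h3 : (∫ y in Set.Ioi (0:ℝ), y ^ (d - 1) • F y)
        = ∫ y in Set.Ioo (0:ℝ) 1,
            y ^ (d - 1) * Real.exp ((d:ℝ) * ∫ u in (0:ℝ)..t, κ' (Real.exp u * y)) := by
      have h4 : (fun y : ℝ => y ^ (d - 1) • F y)
          = fun y : ℝ => Set.indicator (Set.Iic (1:ℝ))
              (fun y => y ^ (d - 1) * Real.exp ((d:ℝ) * ∫ u in (0:ℝ)..t, κ' (Real.exp u * y))) y := by
        funext y
        by_cases hy : y ∈ Set.Iic (1:ℝ)
        · rw [hF]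
          beta_reduce
          rw [Set.indicator_of_mem hy, Set.indicator_of_mem hy, smul_eq_mul]
        · rw [hF]
          beta_reduce
          rw [Set.indicator_of_notMem hy, Set.indicator_of_notMem hy, smul_zero]
      rw [h4, MeasureTheory.setIntegral_indicator measurableSet_Iic, Set.Ioi_inter_Iic,
        MeasureTheory.integral_Ioc_eq_integral_Ioo]
    rw [h3, radial_eq hlip hd t, nsmul_eq_mul, smul_eq_mul]
    ring
  -- constant computation
  have hd2 : (0:ℝ) < (d:ℝ) / 2 := by
    have : (0:ℝ) < (d:ℝ) := by exact_mod_cast hd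
    linarith
  have hGammapos : 0 < Real.Gamma ((d:ℝ)/2) := Real.Gamma_pos_of_pos hd2
  have hGamma1pos : 0 < Real.Gamma ((d:ℝ)/2 + 1) := Real.Gamma_pos_of_pos (by linarith)
  have hvol : (volume (Metric.ball (0 : Ed d) 1)).toReal
      = Real.pi ^ ((d:ℝ)/2) / Real.Gamma ((d:ℝ)/2 + 1) := by
    rw [EuclideanSpace.volume_ball]
    simp only [Fintype.card_fin, ENNReal.ofReal_one, one_pow, one_mul]
    rw [ENNReal.toReal_ofReal (by positivity)]
    congr 1
    rw [Real.sqrt_eq_rpow, ← Real.rpow_natCast (Real.pi ^ ((1:ℝ)/2)) d,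
      ← Real.rpow_mul Real.pi_nonneg]
    congr 1
    ring
  have hconst : (d : ℝ) * (volume (Metric.ball (0 : Ed d) 1)).toReal
      = 2 * Real.pi ^ ((d : ℝ) / 2) / Real.Gamma ((d : ℝ) / 2) := by
    rw [hvol, Real.Gamma_add_one (ne_of_gt hd2)]
    field_simp
  have htend := (tendsto_radial hlip hκ'0 hκ'1 hd).const_mul
    ((d : ℝ) * (volume (Metric.ball (0 : Ed d) 1)).toReal)
  rw [hconst] at htend
  have hfun : (fun t : ℝ =>
      t⁻¹ * ∫ z in Metric.closedBall (0 : Ed d) 1, Real.exp ((d : ℝ) * Khatt d κ t z))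
      = fun t : ℝ => (2 * Real.pi ^ ((d : ℝ) / 2) / Real.Gamma ((d : ℝ) / 2)) *
          (t⁻¹ * ∫ s in Set.Ioi (0:ℝ), phi κ' d t s) := by
    funext t
    rw [hspatial t, hconst]
    ring
  rw [hfun, hjeq]
  convert htend using 2
  ring
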